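/- Auxiliary lemma, part (a): for every u in D(G) and every t ≥ 0, the element Q(t) belongs to D(G); moreover G Q(t) = Q^G(t), where Q^G is defined like Q but with Gu in place of u (that is, Q^G(0) = Gu and Q^G(t) = ∫₀^t (∫_{(t−h,∞)} P_{r+h}(Gu) ν(dr)) u^φ(h) dh for t > 0), and ‖G Q(t)‖∞ ≤ ‖Gu‖∞ for all t ≥ 0. -/

import Mathlib

set_option maxHeartbeats 1000000


open MeasureTheory Set Filter Topology
open scoped ZeroAtInfty

/-- The candidate solution `Q(t) = E^x[u(M_{D_t})]` (for initial datum `u`); with `Gu` in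
place of `u` this is the function `Q^G`. -/
noncomputable def cand {E : Type*} [TopologicalSpace E]
    (P : ℝ → C₀(E, ℝ) →L[ℝ] C₀(E, ℝ)) (ν : Measure ℝ) (uφ : ℝ → ℝ)
    (u : C₀(E, ℝ)) (t : ℝ) : C₀(E, ℝ) :=
  if t = 0 then u
  else ∫ h in Set.Ioo 0 t, uφ h • (∫ r in Set.Ioi (t - h), P (r + h) u ∂ν)

/-- Auxiliary lemma, part (a): for every `u ∈ D(G)` and `t ≥ 0`, `Q(t) ∈ D(G)`,
`G Q(t) = Q^G(t)` and `‖G Q(t)‖∞ ≤ ‖Gu‖∞`. -/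
theorem ctrw_overshoot_aux_a
    {E : Type*} [MetricSpace E] [TopologicalSpace.SeparableSpace E] [LocallyCompactSpace E]
    (P : ℝ → C₀(E, ℝ) →L[ℝ] C₀(E, ℝ))
    (hP0 : P 0 = ContinuousLinearMap.id ℝ C₀(E, ℝ))
    (hPsg : ∀ s t : ℝ, 0 ≤ s → 0 ≤ t → P (s + t) = (P s).comp (P t))
    (hPpos : ∀ t : ℝ, 0 ≤ t → ∀ f : C₀(E, ℝ), (∀ x, 0 ≤ f x) → ∀ x, 0 ≤ P t f x)
    (hPcon : ∀ t : ℝ, 0 ≤ t → ∀ f : C₀(E, ℝ), ‖P t f‖ ≤ ‖f‖)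
    (hPsc : ∀ f : C₀(E, ℝ), Tendsto (fun t => P t f) (𝓝[≥] (0 : ℝ)) (𝓝 f))
    (ν : Measure ℝ)
    (hν1 : ∫⁻ s in Set.Ioi (0 : ℝ), ENNReal.ofReal (min 1 s) ∂ν ≠ ⊤)
    (hνinf : ν (Set.Ioi (0 : ℝ)) = ⊤)
    (hνpos : ∀ t : ℝ, 0 < t → 0 < ν (Set.Ioi t))
    (uφ : ℝ → ℝ) (huφm : Measurable uφ)
    (huφ0 : ∀ t : ℝ, 0 < t → 0 ≤ uφ t)
    (huφmono : ∀ s t : ℝ, 0 < s → s ≤ t → uφ t ≤ uφ s)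
    (hrenew : ∀ t : ℝ, 0 < t →
      ∫⁻ h in Set.Ioo 0 t, ν (Set.Ioi (t - h)) * ENNReal.ofReal (uφ h) = 1)
    (hlog : ∫⁻ t in Set.Ioo (0 : ℝ) 1, ENNReal.ofReal (|Real.log t| * uφ t) ≠ ⊤)
    (u Gu : C₀(E, ℝ))
    (hu : Tendsto (fun h : ℝ => h⁻¹ • (P h u - u)) (𝓝[>] (0 : ℝ)) (𝓝 Gu)) :
    ∀ t : ℝ, 0 ≤ t →
      Tendsto (fun h : ℝ => h⁻¹ • (P h (cand P ν uφ u t) - cand P ν uφ u t))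
        (𝓝[>] (0 : ℝ)) (𝓝 (cand P ν uφ Gu t)) ∧
      ‖cand P ν uφ Gu t‖ ≤ ‖Gu‖ := by
  intro t ht
  rcases eq_or_lt_of_le ht with h0 | ht
  · -- t = 0
    simp only [cand, ← h0, if_pos rfl]
    exact ⟨hu, le_refl _⟩
  -- t > 0 from now on
  have htne : t ≠ 0 := ne_of_gt ht
  -- continuity of the semigroup on [0, ∞)
  have hdiff : ∀ (v : C₀(E, ℝ)) (a b : ℝ), 0 ≤ b → b ≤ a →
      ‖P a v - P b v‖ ≤ ‖P (a - b) v - v‖ := by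
    intro v a b hb hba
    have h1 : P a v = P b (P (a - b) v) := by
      have h2 := hPsg b (a - b) hb (by linarith)
      rw [show b + (a - b) = a by ring] at h2
      rw [h2]; rfl
    rw [h1, show P b (P (a - b) v) - P b v = P b (P (a - b) v - v) by rw [map_sub]]
    exact hPcon b hb _
  have hPc : ∀ v : C₀(E, ℝ), ContinuousOn (fun s => P s v) (Ici (0 : ℝ)) := by
    intro v s₀ hs₀
    rw [Metric.continuousWithinAt_iff]
    intro ε hε
    obtain ⟨δ, hδ, hδ'⟩ := Metric.tendsto_nhdsWithin_nhds.mp (hPsc v) ε hε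
    refine ⟨δ, hδ, fun s hs hss => ?_⟩
    have key : ∀ x : ℝ, 0 ≤ x → x < δ → ‖P x v - v‖ < ε := by
      intro x hx hxδ
      have := hδ' (x := x) hx (by rw [Real.dist_eq]; rw [sub_zero]; rwa [abs_of_nonneg hx])
      rwa [dist_eq_norm] at this
    rcases le_total s₀ s with hc | hc
    · have h1 := hdiff v s s₀ hs₀ hc
      rw [dist_eq_norm]
      refine lt_of_le_of_lt h1 (key _ (by linarith) ?_)
      rw [Real.dist_eq] at hss
      calc s - s₀ ≤ |s - s₀| := le_abs_self _
        _ < δ := hss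
    · have h1 := hdiff v s₀ s hs hc
      rw [dist_eq_norm, norm_sub_rev]
      refine lt_of_le_of_lt h1 (key _ (by linarith) ?_)
      rw [Real.dist_eq] at hss
      calc s₀ - s ≤ |s - s₀| := by rw [abs_sub_comm]; exact le_abs_self _
        _ < δ := hss
  have hPm : ∀ v : C₀(E, ℝ), Continuous (fun s : ℝ => P (max s 0) v) := by
    intro v
    exact (hPc v).comp_continuous (continuous_id.max continuous_const)
      (fun s => mem_Ici.mpr (le_max_right _ _))
  -- finiteness of tails
  have hfin : ∀ a : ℝ, 0 < a → ν (Ioi a) < ⊤ := by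
    intro a ha
    have hm : (0 : ℝ) < min 1 a := lt_min one_pos ha
    have h1 : ENNReal.ofReal (min 1 a) * ν (Ioi a)
        ≤ ∫⁻ s in Ioi (0 : ℝ), ENNReal.ofReal (min 1 s) ∂ν := by
      calc ENNReal.ofReal (min 1 a) * ν (Ioi a)
          = ∫⁻ _ in Ioi a, ENNReal.ofReal (min 1 a) ∂ν := (setLIntegral_const _ _).symm
        _ ≤ ∫⁻ s in Ioi a, ENNReal.ofReal (min 1 s) ∂ν := by
            refine setLIntegral_mono' measurableSet_Ioi (fun s hs => ?_)
            exact ENNReal.ofReal_le_ofReal (le_min (min_le_left _ _)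
              (le_trans (min_le_right _ _) (le_of_lt hs)))
        _ ≤ ∫⁻ s in Ioi (0 : ℝ), ENNReal.ofReal (min 1 s) ∂ν :=
            lintegral_mono_set (Ioi_subset_Ioi ha.le)
    have h2 : ENNReal.ofReal (min 1 a) * ν (Ioi a) ≠ ⊤ :=
      ne_top_of_le_ne_top hν1 h1
    exact ENNReal.lt_top_of_mul_ne_top_right h2
      (by simpa using ENNReal.ofReal_pos.mpr hm |>.ne')
  -- the inner integral
  set F : C₀(E, ℝ) → ℝ → C₀(E, ℝ) :=
    fun v h => ∫ r in Ioi (t - h), P (r + h) v ∂ν with hFdef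
  have hcand : ∀ v, cand P ν uφ v t = ∫ h in Ioo 0 t, uφ h • F v h := by
    intro v; simp only [cand, if_neg htne, hFdef]
  have hinmeas : ∀ (v : C₀(E, ℝ)), ∀ h ∈ Ioo (0:ℝ) t,
      AEStronglyMeasurable (fun r => P (r + h) v) (ν.restrict (Ioi (t - h))) := by
    intro v h hh
    have hth : 0 < t - h := by linarith [hh.2]
    have hcont : Continuous (fun r : ℝ => P (max (r + h) 0) v) :=
      (hPm v).comp (continuous_id.add continuous_const)
    refine hcont.aestronglyMeasurable.congr ?_
    filter_upwards [ae_restrict_mem measurableSet_Ioi] with r hr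
    have : 0 ≤ r + h := by
      have : t - h < r := hr
      linarith [hh.1]
    rw [max_eq_left this]
  have hinint : ∀ (v : C₀(E, ℝ)), ∀ h ∈ Ioo (0:ℝ) t,
      Integrable (fun r => P (r + h) v) (ν.restrict (Ioi (t - h))) := by
    intro v h hh
    have hth : 0 < t - h := by linarith [hh.2]
    haveI : IsFiniteMeasure (ν.restrict (Ioi (t - h))) := by
      constructor
      rw [Measure.restrict_apply_univ]
      exact hfin _ hth
    refine (integrable_const ‖v‖).mono' (hinmeas v h hh) ?_
    filter_upwards [ae_restrict_mem measurableSet_Ioi] with r hr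
    exact hPcon _ (by have : t - h < r := hr; linarith [hh.1]) v
  have hFnorm : ∀ (v : C₀(E, ℝ)), ∀ h ∈ Ioo (0:ℝ) t,
      ‖F v h‖ ≤ (ν (Ioi (t - h))).toReal * ‖v‖ := by
    intro v h hh
    have hth : 0 < t - h := by linarith [hh.2]
    have := norm_setIntegral_le_of_norm_le_const (μ := ν) (s := Ioi (t - h))
      (f := fun r => P (r + h) v) (C := ‖v‖) (hfin _ hth)
      (fun r hr => hPcon _ (by have : t - h < r := hr; linarith [hh.1]) v)
    change _ ≤ ‖v‖ * (ν (Ioi (t - h))).toReal at this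
    linarith [this, mul_comm ‖v‖ (ν (Ioi (t - h))).toReal]
  -- sigma-finiteness of ν restricted to the positive half-line
  set ν' : Measure ℝ := ν.restrict (Ioi (0 : ℝ)) with hν'def
  haveI hσ : SigmaFinite ν' := by
    refine ⟨⟨⟨fun n => Iic 0 ∪ Ioi (1 / (n + 1)), fun _ => mem_univ _, fun n => ?_, ?_⟩⟩⟩
    · have h1 : ν' (Iic 0) = 0 := by
        rw [hν'def, Measure.restrict_apply measurableSet_Iic, Iic_inter_Ioi]
        simp
      have h2 : ν' (Ioi (1 / ((n : ℝ) + 1))) < ⊤ := by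
        refine lt_of_le_of_lt (Measure.restrict_le_self _) (hfin _ ?_)
        positivity
      calc ν' (Iic 0 ∪ Ioi (1 / (n + 1))) ≤ ν' (Iic 0) + ν' (Ioi (1 / (n + 1))) :=
            measure_union_le _ _
        _ < ⊤ := by rw [h1, zero_add]; exact h2
    · refine eq_univ_of_forall fun x => ?_
      rcases le_or_gt x 0 with hx | hx
      · exact mem_iUnion.mpr ⟨0, Or.inl hx⟩
      · obtain ⟨n, hn⟩ := exists_nat_one_div_lt hx
        exact mem_iUnion.mpr ⟨n, Or.inr hn⟩
  -- joint measurability and measurability of h ↦ F v h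
  have hFsm : ∀ v : C₀(E, ℝ), ∃ G : ℝ → C₀(E, ℝ), StronglyMeasurable G ∧
      ∀ h ∈ Ioo (0:ℝ) t, F v h = G h := by
    intro v
    set g : ℝ × ℝ → C₀(E, ℝ) :=
      {p : ℝ × ℝ | t - p.1 < p.2}.indicator (fun p => P (max (p.2 + p.1) 0) v) with hgdef
    have hgm : StronglyMeasurable g := by
      refine Continuous.stronglyMeasurable ?_ |>.indicator ?_
      · exact (hPm v).comp (continuous_snd.add continuous_fst)
      · exact measurableSet_lt (measurable_const.sub measurable_fst) measurable_snd
    refine ⟨fun h => ∫ r, g (h, r) ∂ν', hgm.integral_prod_right', fun h hh => ?_⟩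
    have hth : 0 < t - h := by linarith [hh.2]
    have hsub : Ioi (t - h) ∩ Ioi (0:ℝ) = Ioi (t - h) :=
      inter_eq_left.mpr (Ioi_subset_Ioi hth.le)
    calc F v h = ∫ r in Ioi (t - h), P (max (r + h) 0) v ∂ν := by
          refine setIntegral_congr_fun measurableSet_Ioi (fun r hr => ?_)
          have : 0 ≤ r + h := by
            have : t - h < r := hr; linarith [hh.1]
          rw [max_eq_left this]
      _ = ∫ r in Ioi (t - h), P (max (r + h) 0) v ∂ν' := by
          rw [hν'def, Measure.restrict_restrict measurableSet_Ioi, hsub]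
      _ = ∫ r, (Ioi (t - h)).indicator (fun r => P (max (r + h) 0) v) r ∂ν' :=
          (integral_indicator measurableSet_Ioi).symm
      _ = ∫ r, g (h, r) ∂ν' := by
          refine integral_congr_ae (Eventually.of_forall fun r => ?_)
          simp only [hgdef, indicator_apply, mem_Ioi, mem_setOf_eq]
  have houtmeas : ∀ v : C₀(E, ℝ),
      AEStronglyMeasurable (fun h => uφ h • F v h) (volume.restrict (Ioo 0 t)) := by
    intro v
    obtain ⟨G, hGm, hGeq⟩ := hFsm v
    have h1 : AEStronglyMeasurable (fun h => F v h) (volume.restrict (Ioo 0 t)) := by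
      refine hGm.aestronglyMeasurable.congr ?_
      filter_upwards [ae_restrict_mem measurableSet_Ioo] with h hh
      exact (hGeq h hh).symm
    exact (huφm.aestronglyMeasurable).smul h1
  -- uniform bound on the L¹ norm
  have hbound : ∀ v : C₀(E, ℝ),
      ∫⁻ h in Ioo 0 t, ENNReal.ofReal ‖uφ h • F v h‖ ≤ ENNReal.ofReal ‖v‖ := by
    intro v
    have hmeas1 : Measurable fun h : ℝ => ν (Ioi (t - h)) := by
      refine Monotone.measurable (fun a b hab => ?_)
      exact measure_mono (Ioi_subset_Ioi (by linarith))
    calc ∫⁻ h in Ioo 0 t, ENNReal.ofReal ‖uφ h • F v h‖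
        ≤ ∫⁻ h in Ioo 0 t, ν (Ioi (t - h)) * ENNReal.ofReal (uφ h) * ENNReal.ofReal ‖v‖ := by
          refine setLIntegral_mono' measurableSet_Ioo (fun h hh => ?_)
          have hth : 0 < t - h := by linarith [hh.2]
          have huφnn : 0 ≤ uφ h := huφ0 h hh.1
          have h1 : ‖uφ h • F v h‖ ≤ uφ h * ((ν (Ioi (t - h))).toReal * ‖v‖) := by
            have hns : ‖uφ h • F v h‖ = ‖uφ h‖ * ‖F v h‖ :=
              norm_smul (β := C₀(E, ℝ)) (uφ h) (F v h)
            rw [hns, Real.norm_eq_abs, abs_of_nonneg huφnn]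
            exact mul_le_mul_of_nonneg_left (hFnorm v h hh) huφnn
          refine le_trans (ENNReal.ofReal_le_ofReal h1) ?_
          rw [ENNReal.ofReal_mul huφnn, ENNReal.ofReal_mul ENNReal.toReal_nonneg,
            ENNReal.ofReal_toReal (hfin _ hth).ne]
          ring_nf
          exact le_of_eq (by ring)
      _ = (∫⁻ h in Ioo 0 t, ν (Ioi (t - h)) * ENNReal.ofReal (uφ h)) * ENNReal.ofReal ‖v‖ :=
          lintegral_mul_const _ (hmeas1.mul (huφm.ennreal_ofReal))
      _ = ENNReal.ofReal ‖v‖ := by rw [hrenew t ht, one_mul]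
  have houtint : ∀ v : C₀(E, ℝ),
      Integrable (fun h => uφ h • F v h) (volume.restrict (Ioo 0 t)) := by
    intro v
    refine ⟨houtmeas v, ?_⟩
    rw [hasFiniteIntegral_iff_norm]
    exact lt_of_le_of_lt (hbound v) ENNReal.ofReal_lt_top
  have hnorm : ∀ v : C₀(E, ℝ), ‖cand P ν uφ v t‖ ≤ ‖v‖ := by
    intro v
    rw [hcand]
    refine le_trans (norm_integral_le_lintegral_norm _) ?_
    calc (∫⁻ h in Ioo 0 t, ENNReal.ofReal ‖uφ h • F v h‖).toReal
        ≤ (ENNReal.ofReal ‖v‖).toReal :=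
          ENNReal.toReal_mono ENNReal.ofReal_ne_top (hbound v)
      _ = ‖v‖ := ENNReal.toReal_ofReal (norm_nonneg _)
  -- commutation with the semigroup
  have hcomm : ∀ s : ℝ, 0 ≤ s → ∀ v : C₀(E, ℝ),
      P s (cand P ν uφ v t) = cand P ν uφ (P s v) t := by
    intro s hs v
    rw [hcand v, hcand (P s v), ← ContinuousLinearMap.integral_comp_comm (P s) (houtint v)]
    refine setIntegral_congr_fun measurableSet_Ioo (fun h hh => ?_)
    have hrh : ∀ r ∈ Ioi (t - h), (0:ℝ) ≤ r + h := by
      intro r hr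
      have : t - h < r := hr; linarith [hh.1]
    calc P s (uφ h • F v h) = uφ h • P s (F v h) := map_smul _ _ _
      _ = uφ h • F (P s v) h := by
          congr 1
          calc P s (F v h) = ∫ r in Ioi (t - h), P s (P (r + h) v) ∂ν :=
                (ContinuousLinearMap.integral_comp_comm (P s) (hinint v h hh)).symm
            _ = F (P s v) h := by
                refine setIntegral_congr_fun measurableSet_Ioi (fun r hr => ?_)
                have h1 := hPsg s (r + h) hs (hrh r hr)
                have h2 := hPsg (r + h) s (hrh r hr) hs
                rw [show s + (r + h) = r + h + s by ring] at h1
                have : (P s).comp (P (r + h)) = (P (r + h)).comp (P s) := by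
                  rw [← h1, ← h2]
                calc P s (P (r + h) v) = ((P s).comp (P (r + h))) v := rfl
                  _ = ((P (r + h)).comp (P s)) v := by rw [this]
                  _ = P (r + h) (P s v) := rfl
  -- linearity
  have hsub : ∀ v w : C₀(E, ℝ),
      cand P ν uφ (v - w) t = cand P ν uφ v t - cand P ν uφ w t := by
    intro v w
    rw [hcand, hcand, hcand, ← integral_sub (houtint v) (houtint w)]
    refine setIntegral_congr_fun measurableSet_Ioo (fun h hh => ?_)
    have hF1 : F (v - w) h = F v h - F w h := by
      calc F (v - w) h = ∫ r in Ioi (t - h), (P (r + h) v - P (r + h) w) ∂ν := by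
            refine setIntegral_congr_fun measurableSet_Ioi (fun r _ => map_sub _ _ _)
        _ = F v h - F w h := integral_sub (hinint v h hh) (hinint w h hh)
    rw [hF1]; exact smul_sub (A := C₀(E, ℝ)) (uφ h) (F v h) (F w h)
  have hsmul : ∀ (c : ℝ) (v : C₀(E, ℝ)),
      cand P ν uφ (c • v) t = c • cand P ν uφ v t := by
    intro c v
    rw [hcand, hcand, ← integral_smul]
    refine setIntegral_congr_fun measurableSet_Ioo (fun h hh => ?_)
    have hF1 : F (c • v) h = c • F v h := by
      calc F (c • v) h = ∫ r in Ioi (t - h), c • P (r + h) v ∂ν := by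
            refine setIntegral_congr_fun measurableSet_Ioi (fun r _ => map_smul _ _ _)
        _ = c • F v h := integral_smul _ _
    rw [hF1, smul_comm]
  -- assembly
  refine ⟨?_, hnorm Gu⟩
  rw [tendsto_iff_norm_sub_tendsto_zero]
  have hkey : ∀ h : ℝ, 0 < h →
      h⁻¹ • (P h (cand P ν uφ u t) - cand P ν uφ u t)
        = cand P ν uφ (h⁻¹ • (P h u - u)) t := by
    intro h hh
    rw [hsmul, hsub, hcomm h hh.le]
  refine squeeze_zero' ?_ ?_ ((tendsto_iff_norm_sub_tendsto_zero).mp hu)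
  · exact Eventually.of_forall fun _ => norm_nonneg _
  · filter_upwards [self_mem_nhdsWithin] with h hh
    have hh' : (0:ℝ) < h := hh
    rw [hkey h hh']
    calc ‖cand P ν uφ (h⁻¹ • (P h u - u)) t - cand P ν uφ Gu t‖
        = ‖cand P ν uφ (h⁻¹ • (P h u - u) - Gu) t‖ := by rw [hsub]
      _ ≤ ‖h⁻¹ • (P h u - u) - Gu‖ := hnorm _
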